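/- Let R be a finite Eulerian poset and σ any linear extension of R. Then the echelonmotion map Ech_σ : R → R is an involution, i.e., Ech_σ ∘ Ech_σ is the identity. -/

import Mathlib

open scoped Classical
open Finset
set_option maxHeartbeats 1000000

noncomputable section

/-- A linear extension of a finite poset, viewed as an order-preserving
bijection onto `Fin n`. -/
def IsLinExt {α : Type*} [PartialOrder α] {n : ℕ} (σ : α ≃ Fin n) : Prop :=
  ∀ a b : α, a ≤ b → σ a ≤ σ b

/-- The Cartan matrix of a finite poset with respect to a linear extension. -/
def cartan {α : Type*} [PartialOrder α] {n : ℕ} (σ : α ≃ Fin n) :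
    Matrix (Fin n) (Fin n) ℂ :=
  fun i j => if σ.symm j ≤ σ.symm i then 1 else 0

/-- Upper-triangular matrices. -/
def IsUpperTri {n : ℕ} (U : Matrix (Fin n) (Fin n) ℂ) : Prop :=
  ∀ i j : Fin n, j < i → U i j = 0

/-- The permutation matrix of `π`, with a `1` in row `i` and column `π i`. -/
def permMat {n : ℕ} (π : Equiv.Perm (Fin n)) : Matrix (Fin n) (Fin n) ℂ :=
  fun i j => if π i = j then 1 else 0

/-- `π` is the (unique) permutation indexing the Bruhat cell of `W`,
i.e. `W ∈ B (permMat π) B` with `B` the invertible upper-triangular matrices. -/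
def IsBruhatPerm {n : ℕ} (W : Matrix (Fin n) (Fin n) ℂ) (π : Equiv.Perm (Fin n)) : Prop :=
  ∃ U₁ U₂ : Matrix (Fin n) (Fin n) ℂ,
    IsUpperTri U₁ ∧ IsUpperTri U₂ ∧ IsUnit U₁.det ∧ IsUnit U₂.det ∧
      W = U₁ * permMat π * U₂

/-- Echelonmotion with respect to `σ`, given the Bruhat permutation `π` of the
Cartan matrix: `ech σ π x = y` iff `permMat π` has a `1` in row `σ y`, column `σ x`. -/
def ech {α : Type*} [PartialOrder α] {n : ℕ} (σ : α ≃ Fin n) (π : Equiv.Perm (Fin n)) :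
    α → α := fun x => σ.symm (π⁻¹ (σ x))

end

noncomputable section EchAuxSection

open Matrix
open scoped ComplexOrder

namespace EchAux

variable {n : ℕ}

lemma upperTri_one : IsUpperTri (1 : Matrix (Fin n) (Fin n) ℂ) := by
  intro i j h
  simp [Matrix.one_apply, h.ne']

lemma upperTri_mul {A B : Matrix (Fin n) (Fin n) ℂ}
    (hA : IsUpperTri A) (hB : IsUpperTri B) : IsUpperTri (A * B) := by
  intro i j h
  rw [Matrix.mul_apply]
  apply Finset.sum_eq_zero
  intro k _
  rcases lt_or_ge k i with hk | hk
  · rw [hA i k hk, zero_mul]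
  · rw [hB k j (lt_of_lt_of_le h hk), mul_zero]

lemma upperTri_diagonal (d : Fin n → ℂ) : IsUpperTri (Matrix.diagonal d) :=
  fun _ _ h => Matrix.diagonal_apply_ne d h.ne'

lemma permMat_mul (π τ : Equiv.Perm (Fin n)) :
    permMat π * permMat τ = permMat (τ * π) := by
  ext i j
  rw [Matrix.mul_apply]
  rw [Finset.sum_eq_single (π i)]
  · simp [permMat, Equiv.Perm.mul_apply]
    exact if_congr Iff.rfl rfl rfl
  · intro k _ hk
    simp [permMat, Ne.symm hk]
  · simp

lemma permMat_one : permMat (1 : Equiv.Perm (Fin n)) = 1 := by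
  ext i j
  simp [permMat, Matrix.one_apply]
  exact if_congr Iff.rfl rfl rfl

/-- The lower-left corner submatrix: rows `≥ i`, columns `≤ j`. -/
def corner (M : Matrix (Fin n) (Fin n) ℂ) (i j : Fin n) :
    Matrix {k : Fin n // i ≤ k} {l : Fin n // l ≤ j} ℂ :=
  M.submatrix Subtype.val Subtype.val

lemma isUnit_det_sub {A : Matrix (Fin n) (Fin n) ℂ} (hA : IsUpperTri A)
    (h : IsUnit A.det) (p : Fin n → Prop) [DecidablePred p] :
    IsUnit ((A.submatrix (Subtype.val : {k : Fin n // p k} → Fin n) Subtype.val)).det := by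
  have hbt : ((A.submatrix (Subtype.val : {k : Fin n // p k} → Fin n) Subtype.val)).BlockTriangular
      id := by
    intro a b hab
    exact hA _ _ (by exact_mod_cast hab)
  have hbt' : A.BlockTriangular id := fun i j hij => hA i j hij
  rw [Matrix.det_of_upperTriangular hbt]
  rw [Matrix.det_of_upperTriangular hbt'] at h
  rw [isUnit_iff_ne_zero] at h ⊢
  rw [Finset.prod_ne_zero_iff] at h ⊢
  intro a _
  exact h a.val (Finset.mem_univ _)

lemma corner_mul_left {A M : Matrix (Fin n) (Fin n) ℂ} (hA : IsUpperTri A) (i j : Fin n) :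
    corner (A * M) i j =
      @HMul.hMul _ _ _ Matrix.instHMulOfFintypeOfMulOfAddCommMonoid
        (A.submatrix (Subtype.val : {k : Fin n // i ≤ k} → Fin n) Subtype.val) (corner M i j) := by
  ext a b
  simp only [corner, Matrix.submatrix_apply, Matrix.mul_apply]
  rw [← Finset.sum_filter_of_ne (p := fun m : Fin n => i ≤ m)
      (fun m _ hm => by
        by_contra hime
        exact hm (by rw [hA a.val m (lt_of_lt_of_le (lt_of_not_ge hime) a.2), zero_mul]))]
  exact Finset.sum_subtype _ (by simp) _

lemma corner_mul_right {M C : Matrix (Fin n) (Fin n) ℂ} (hC : IsUpperTri C) (i j : Fin n) :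
    corner (M * C) i j =
      @HMul.hMul _ _ _ Matrix.instHMulOfFintypeOfMulOfAddCommMonoid
        (corner M i j) (C.submatrix (Subtype.val : {l : Fin n // l ≤ j} → Fin n) Subtype.val) := by
  ext a b
  simp only [corner, Matrix.submatrix_apply, Matrix.mul_apply]
  rw [← Finset.sum_filter_of_ne (p := fun m : Fin n => m ≤ j)
      (fun m _ hm => by
        by_contra hime
        exact hm (by rw [hC m b.val (lt_of_le_of_lt b.2 (lt_of_not_ge hime)), mul_zero]))]
  exact Finset.sum_subtype _ (by simp) _

lemma rank_corner_permMat (π : Equiv.Perm (Fin n)) (i j : Fin n) :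
    (corner (permMat π) i j).rank
      = (Finset.univ.filter fun k : Fin n => i ≤ k ∧ π k ≤ j).card := by
  have hQ : corner (permMat π) i j * (corner (permMat π) i j)ᴴ
      = Matrix.diagonal (fun a : {k : Fin n // i ≤ k} => if π a.val ≤ j then (1 : ℂ) else 0) := by
    ext a b
    rw [Matrix.mul_apply]
    have hterm : ∀ l : {l : Fin n // l ≤ j},
        corner (permMat π) i j a l * (corner (permMat π) i j)ᴴ l b
        = if (π a.val = l.val ∧ π b.val = l.val) then (1 : ℂ) else 0 := by
      intro l
      simp only [corner, Matrix.conjTranspose_apply, Matrix.submatrix_apply, permMat]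
      by_cases h1 : π a.val = l.val <;> by_cases h2 : π b.val = l.val <;> simp [h1, h2]
    rw [Finset.sum_congr rfl (fun l _ => hterm l)]
    by_cases h1 : π a.val ≤ j
    · rw [Finset.sum_eq_single (⟨π a.val, h1⟩ : {l : Fin n // l ≤ j})]
      · by_cases hab : a = b
        · subst hab
          simp [Matrix.diagonal_apply_eq, h1]
        · have hne : π b.val ≠ π a.val := by
            intro h
            exact hab (Subtype.ext (π.injective (by rw [h]))).symm
          simp [Matrix.diagonal_apply_ne _ hab, hne]
      · intro l _ hl
        have : π a.val ≠ l.val := fun h => hl (Subtype.ext h.symm)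
        simp [this]
      · simp
    · rw [Finset.sum_eq_zero]
      · by_cases hab : a = b
        · subst hab; simp [Matrix.diagonal_apply_eq, h1]
        · simp [Matrix.diagonal_apply_ne _ hab]
      · intro l _
        have : π a.val ≠ l.val := fun h => h1 (h ▸ l.2)
        simp [this]
  have hr := Matrix.rank_self_mul_conjTranspose (corner (permMat π) i j)
  rw [hQ, Matrix.rank_diagonal] at hr
  rw [← hr]
  rw [Fintype.card_congr (Equiv.subtypeEquivRight
    (p := fun a : {k : Fin n // i ≤ k} => (if π a.val ≤ j then (1 : ℂ) else 0) ≠ 0)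
    (q := fun a : {k : Fin n // i ≤ k} => π a.val ≤ j)
    (fun a => by by_cases h : π a.val ≤ j <;> simp [h]))]
  rw [Fintype.card_congr (Equiv.subtypeSubtypeEquivSubtypeInter
    (fun k : Fin n => i ≤ k) (fun k => π k ≤ j))]
  rw [Fintype.card_subtype]

lemma rank_corner_bruhat {A C : Matrix (Fin n) (Fin n) ℂ} (τ : Equiv.Perm (Fin n))
    (hA : IsUpperTri A) (hC : IsUpperTri C) (hdA : IsUnit A.det) (hdC : IsUnit C.det)
    (i j : Fin n) :
    (corner (A * permMat τ * C) i j).rank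
      = (Finset.univ.filter fun k : Fin n => i ≤ k ∧ τ k ≤ j).card := by
  rw [show A * permMat τ * C = A * (permMat τ * C) from Matrix.mul_assoc _ _ _]
  rw [corner_mul_left hA, corner_mul_right hC]
  have hu1 : IsUnit ((A.submatrix (Subtype.val : {k : Fin n // i ≤ k} → Fin n)
      Subtype.val)).det := isUnit_det_sub hA hdA (fun k => i ≤ k)
  have hu2 : IsUnit ((C.submatrix (Subtype.val : {l : Fin n // l ≤ j} → Fin n)
      Subtype.val)).det := isUnit_det_sub hC hdC (fun l => l ≤ j)
  rw [Matrix.rank_mul_eq_right_of_isUnit_det _ _ hu1]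
  have r2 := Matrix.rank_mul_eq_left_of_isUnit_det
    (C.submatrix (Subtype.val : {l : Fin n // l ≤ j} → Fin n)
      (Subtype.val : {l : Fin n // l ≤ j} → Fin n))
    (corner (permMat τ) i j) hu2
  rw [r2]
  exact rank_corner_permMat τ i j

lemma perm_eq_of_card (τ ρ : Equiv.Perm (Fin n))
    (h : ∀ i j : Fin n, (Finset.univ.filter fun k : Fin n => i ≤ k ∧ τ k ≤ j).card
        = (Finset.univ.filter fun k : Fin n => i ≤ k ∧ ρ k ≤ j).card) : τ = ρ := by
  suffices hk : ∀ i, τ i = ρ i from Equiv.ext hk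
  intro i
  refine WellFounded.induction (C := fun i : Fin n => τ i = ρ i)
    (wellFounded_gt (α := Fin n)) i ?_
  intro i IH
  have key : ∀ j : Fin n, (if τ i ≤ j then (1 : ℕ) else 0) = (if ρ i ≤ j then 1 else 0) := by
    intro j
    have hsplit : ∀ π' : Equiv.Perm (Fin n),
        (Finset.univ.filter fun k : Fin n => i ≤ k ∧ π' k ≤ j).card
        = (Finset.univ.filter fun k : Fin n => i < k ∧ π' k ≤ j).card
          + (if π' i ≤ j then 1 else 0) := by
      intro π'
      have hpt : ∀ k : Fin n, (if i ≤ k ∧ π' k ≤ j then (1 : ℕ) else 0)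
          = (if i < k ∧ π' k ≤ j then 1 else 0) + (if k = i ∧ π' k ≤ j then 1 else 0) := by
        intro k
        rcases lt_trichotomy i k with h' | h' | h'
        · simp [h', h'.le, h'.ne']
        · subst h'; simp
        · simp [h'.not_gt, not_le.2 h', h'.ne]
      rw [Finset.card_filter, Finset.card_filter,
        Finset.sum_congr rfl (fun k _ => hpt k), Finset.sum_add_distrib]
      congr 1
      rw [Finset.sum_congr rfl
        (fun k _ => ite_and (k = i) (π' k ≤ j) (1 : ℕ) 0),
        Finset.sum_ite_eq' Finset.univ i (fun k => if π' k ≤ j then (1 : ℕ) else 0)]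
      simp
    have h1 := h i j
    rw [hsplit τ, hsplit ρ] at h1
    have h2 : (Finset.univ.filter fun k : Fin n => i < k ∧ τ k ≤ j)
        = (Finset.univ.filter fun k : Fin n => i < k ∧ ρ k ≤ j) := by
      apply Finset.filter_congr
      intro k _
      constructor
      · rintro ⟨hik, hkj⟩; exact ⟨hik, by rwa [← IH k hik]⟩
      · rintro ⟨hik, hkj⟩; exact ⟨hik, by rwa [IH k hik]⟩
    rw [h2] at h1
    exact Nat.add_left_cancel h1
  have le1 : τ i ≤ ρ i := by
    have hk := key (ρ i)
    rw [if_pos le_rfl] at hk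
    by_contra hx
    rw [if_neg hx] at hk
    exact absurd hk (by norm_num)
  have le2 : ρ i ≤ τ i := by
    have hk := key (τ i)
    rw [if_pos le_rfl] at hk
    by_contra hx
    rw [if_neg hx] at hk
    exact absurd hk.symm (by norm_num)
  exact le_antisymm le1 le2

end EchAux

end EchAuxSection

/-- Echelonmotion on a finite Eulerian poset, with respect to any linear
extension, is an involution. -/
theorem stmt8 {α : Type*} [PartialOrder α] [Fintype α] {n : ℕ}
    (σ : α ≃ Fin n) (hσ : IsLinExt σ)
    (rk : α → ℤ) (hrk : ∀ a b : α, a ⋖ b → rk b = rk a + 1)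
    (μ : α → α → ℂ)
    (hμ0 : ∀ a b : α, ¬ a ≤ b → μ a b = 0)
    (hμ : ∀ a b : α, a ≤ b →
      ∑ z ∈ Finset.univ.filter (fun z : α => a ≤ z ∧ z ≤ b), μ a z
        = if a = b then 1 else 0)
    (hEuler : ∀ a b : α, a ≤ b → μ a b = (-1 : ℂ) ^ (rk b - rk a))
    (π : Equiv.Perm (Fin n)) (hπ : IsBruhatPerm (cartan σ) π) :
    ∀ x : α, ech σ π (ech σ π x) = x := by
  classical
  obtain ⟨U₁, U₂, hU₁, hU₂, hd₁, hd₂, hW⟩ := hπ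
  set W := cartan σ with hWdef
  set D : Matrix (Fin n) (Fin n) ℂ :=
    Matrix.diagonal (fun k : Fin n => (-1 : ℂ) ^ (rk (σ.symm k))) with hD
  have hne : (-1 : ℂ) ≠ 0 := by norm_num
  have hsgn : ∀ p q : ℤ, (-1 : ℂ) ^ p * (-1 : ℂ) ^ q = (-1 : ℂ) ^ (p - q) := by
    intro p q
    rw [← zpow_add₀ hne]
    rw [show p + q = p - q + 2 * q by ring, zpow_add₀ hne, zpow_mul,
      show ((-1 : ℂ)) ^ (2 : ℤ) = 1 by norm_num, one_zpow, mul_one]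
  -- Step 1 : W * (D * W * D) = 1 (Eulerian inverse).
  have hWV : W * (D * W * D) = 1 := by
    ext i j
    rw [Matrix.mul_apply]
    have hentry : ∀ k : Fin n, W i k * (D * W * D) k j
        = (if σ.symm j ≤ σ.symm k ∧ σ.symm k ≤ σ.symm i
            then μ (σ.symm j) (σ.symm k) else 0) := by
      intro k
      rw [show D * W * D = D * (W * D) from Matrix.mul_assoc _ _ _,
        Matrix.diagonal_mul, Matrix.mul_diagonal]
      show (if σ.symm k ≤ σ.symm i then (1 : ℂ) else 0)
        * ((-1 : ℂ) ^ (rk (σ.symm k)) * ((if σ.symm j ≤ σ.symm k then (1 : ℂ) else 0)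
            * (-1 : ℂ) ^ (rk (σ.symm j)))) = _
      by_cases hc1 : σ.symm k ≤ σ.symm i
      · by_cases hc2 : σ.symm j ≤ σ.symm k
        · rw [if_pos hc1, if_pos hc2, if_pos ⟨hc2, hc1⟩, one_mul, one_mul,
            hsgn (rk (σ.symm k)) (rk (σ.symm j)), hEuler _ _ hc2]
        · rw [if_neg hc2, if_neg (show ¬(σ.symm j ≤ σ.symm k ∧ σ.symm k ≤ σ.symm i)
              from fun h => hc2 h.1)]
          ring
      · rw [if_neg hc1, if_neg (show ¬(σ.symm j ≤ σ.symm k ∧ σ.symm k ≤ σ.symm i)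
            from fun h => hc1 h.2)]
        ring
    rw [Finset.sum_congr rfl (fun k _ => hentry k)]
    rw [Fintype.sum_equiv σ.symm _
      (fun z : α => if σ.symm j ≤ z ∧ z ≤ σ.symm i then μ (σ.symm j) z else 0)
      (fun k => rfl)]
    rw [← Finset.sum_filter]
    by_cases hab : σ.symm j ≤ σ.symm i
    · rw [hμ _ _ hab]
      rw [Matrix.one_apply]
      by_cases hij : i = j
      · subst hij; rw [if_pos rfl, if_pos rfl]
      · rw [if_neg (fun h : σ.symm j = σ.symm i => hij (σ.symm.injective h).symm),
          if_neg hij]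
    · rw [Finset.sum_eq_zero, Matrix.one_apply,
        if_neg (fun hij : i = j => hab (hij ▸ le_refl (σ.symm j)))]
      intro z hz
      rw [Finset.mem_filter] at hz
      exact absurd (hz.2.1.trans hz.2.2) hab
  -- Step 2: algebra.  Set A := U₂ * D * U₁; then permMat π⁻¹ = A * permMat π * A.
  set P := permMat π with hP
  set A := U₂ * D * U₁ with hA
  have hmm : U₁ * (P * (U₂ * (D * (W * D)))) = 1 := by
    have := hWV
    nth_rewrite 1 [hW] at this
    simpa only [Matrix.mul_assoc] using this
  have h6 := mul_eq_one_comm.mp hmm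
  have hPX : P * (U₂ * (D * (W * (D * U₁)))) = 1 := by
    simpa only [Matrix.mul_assoc] using h6
  have hAPA : A * P * A = U₂ * (D * (W * (D * U₁))) := by
    rw [hW, hA]
    simp only [Matrix.mul_assoc]
  have hQP : permMat π⁻¹ * P = 1 := by
    rw [hP, EchAux.permMat_mul, mul_inv_cancel, EchAux.permMat_one]
  have hX : A * P * A = permMat π⁻¹ := by
    calc A * P * A = 1 * (A * P * A) := (one_mul _).symm
      _ = (permMat π⁻¹ * P) * (A * P * A) := by rw [hQP]
      _ = permMat π⁻¹ * (P * (A * P * A)) := Matrix.mul_assoc _ _ _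
      _ = permMat π⁻¹ * 1 := by rw [hAPA, hPX]
      _ = permMat π⁻¹ := mul_one _
  have hDtri : IsUpperTri D := EchAux.upperTri_diagonal _
  have hAtri : IsUpperTri A := EchAux.upperTri_mul (EchAux.upperTri_mul hU₂ hDtri) hU₁
  have hDdet : IsUnit D.det := by
    rw [hD, Matrix.det_diagonal, isUnit_iff_ne_zero, Finset.prod_ne_zero_iff]
    intro k _
    exact zpow_ne_zero _ hne
  have hAdet : IsUnit A.det := by
    rw [hA, Matrix.det_mul, Matrix.det_mul]
    exact ((hd₂.mul hDdet).mul hd₁)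
  -- Step 3: uniqueness of the Bruhat permutation gives π⁻¹ = π.
  have hinv : π⁻¹ = π := by
    apply EchAux.perm_eq_of_card
    intro i j
    have e1 := EchAux.rank_corner_bruhat (n := n) π⁻¹ EchAux.upperTri_one EchAux.upperTri_one
      (by simp) (by simp) i j
    have e2 := EchAux.rank_corner_bruhat π hAtri hAtri hAdet hAdet i j
    rw [one_mul, mul_one, ← hX] at e1
    rw [← hP] at e2
    exact e1.symm.trans e2
  -- Step 4: conclude.
  intro x
  show σ.symm (π⁻¹ (σ (σ.symm (π⁻¹ (σ x))))) = x
  rw [Equiv.apply_symm_apply]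
  have h1 : π⁻¹ (σ x) = π (σ x) := by rw [hinv]
  rw [h1, ← Equiv.Perm.mul_apply, inv_mul_cancel, Equiv.Perm.one_apply, Equiv.symm_apply_apply]
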